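/- Both the logarithmic modulus ω(r) = k/ln(1/r) (for k ≥ 0, on small r) and the nonlogarithmic modulus ω(r) = L·(ln ln(1/r))/ln(1/r) (for 0 < L ≤ 1/n) satisfy the condition: sup{∫_s^{λ(ks)} dt/(t·a^q(t)) : s ≥ λ₀} < ∞ for all k ≥ 1, and moreover ∫_{λ₀}^∞ dt/(t·a^q(t)) = ∞, where a(λ) = λ^{ω(λ^{-q/n})} for λ ≥ λ₀ and λ(s) is the inverse of s(λ)=λ/a(λ). -/

import Mathlib

open Real Set MeasureTheory intervalIntegral Filter

/-- The function `a(λ) = λ^{ω(λ^{-q/n})}` for `λ ≥ λ₀ = r₀^{-n/q}`, extended by the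
constant `λ₀^{ω(r₀)}` below `λ₀`. -/
noncomputable def aFun (n : ℕ) (q r₀ : ℝ) (ω : ℝ → ℝ) (t : ℝ) : ℝ :=
  if r₀ ^ (-(n:ℝ) / q) ≤ t then t ^ (ω (t ^ (-(q / (n:ℝ)))))
  else (r₀ ^ (-(n:ℝ) / q)) ^ ω r₀

/-- Condition (1.8) of the paper (for all `k ≥ 1`) together with the divergence
`∫_{λ₀}^∞ dt/(t a^q(t)) = ∞`, stated for any inverse `Λ` of `s(λ) = λ / a(λ)`. -/
def GehringCond (n : ℕ) (q r₀ : ℝ) (ω : ℝ → ℝ) : Prop :=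
  ∀ Λ : ℝ → ℝ,
    StrictMonoOn (fun t => t / aFun n q r₀ ω t) (Set.Ici (r₀ ^ (-(n:ℝ) / q))) →
    (∀ t ≥ r₀ ^ (-(n:ℝ) / q), Λ (t / aFun n q r₀ ω t) = t) →
    ((∀ K : ℝ, 1 ≤ K → ∃ C : ℝ, ∀ s ≥ r₀ ^ (-(n:ℝ) / q),
        (∫ t in s..(Λ (K * s)), 1 / (t * aFun n q r₀ ω t ^ q)) ≤ C) ∧
      Filter.Tendsto
        (fun b => ∫ t in (r₀ ^ (-(n:ℝ) / q))..b, 1 / (t * aFun n q r₀ ω t ^ q))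
        Filter.atTop Filter.atTop)

-- helper: upper bound for ∫ 1/(t g t) by comparison with constant lower bound w ≤ g
lemma int_le_aux {a b w : ℝ} (h1a : 1 < a) (hab : a ≤ b) {g : ℝ → ℝ}
    (hg : ContinuousOn g (Set.Icc a b)) (hw : 0 < w)
    (hwg : ∀ t ∈ Set.Icc a b, w ≤ g t) :
    (∫ t in a..b, 1 / (t * g t)) ≤ w⁻¹ * Real.log (b / a) := by
  have h0a : (0:ℝ) < a := lt_trans one_pos h1a
  have hIcc : Set.uIcc a b = Set.Icc a b := Set.uIcc_of_le hab
  have hcont1 : ContinuousOn (fun t => 1 / (t * g t)) (Set.Icc a b) := by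
    apply ContinuousOn.div continuousOn_const (continuousOn_id.mul hg)
    intro t ht
    have ht0 : 0 < t := lt_of_lt_of_le h0a ht.1
    have hgt : 0 < g t := lt_of_lt_of_le hw (hwg t ht)
    exact ne_of_gt (mul_pos ht0 hgt)
  have hcont2 : ContinuousOn (fun t : ℝ => w⁻¹ * t⁻¹) (Set.Icc a b) := by
    apply ContinuousOn.mul continuousOn_const
    exact ContinuousOn.inv₀ continuousOn_id
      (fun t ht => ne_of_gt (lt_of_lt_of_le h0a ht.1))
  have key : (∫ t in a..b, 1 / (t * g t)) ≤ ∫ t in a..b, w⁻¹ * t⁻¹ := by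
    apply intervalIntegral.integral_mono_on hab
    · exact (hIcc ▸ hcont1).intervalIntegrable
    · exact (hIcc ▸ hcont2).intervalIntegrable
    · intro t ht
      have ht0 : 0 < t := lt_of_lt_of_le h0a ht.1
      have hgt : 0 < g t := lt_of_lt_of_le hw (hwg t ht)
      have h1 : (g t)⁻¹ ≤ w⁻¹ := inv_anti₀ hw (hwg t ht)
      rw [one_div, mul_inv]
      nlinarith [inv_nonneg.2 ht0.le]
  rwa [intervalIntegral.integral_const_mul, integral_inv
    (by rw [hIcc]; rintro ⟨h1, h2⟩; linarith)] at key

-- helper: ∫ t in a..b, (t * log t)⁻¹ = log log b - log log a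
lemma int_loglog {a b : ℝ} (h1a : 1 < a) (hab : a ≤ b) :
    (∫ t in a..b, (t * Real.log t)⁻¹)
      = Real.log (Real.log b) - Real.log (Real.log a) := by
  have hIcc : Set.uIcc a b = Set.Icc a b := Set.uIcc_of_le hab
  have hderiv : ∀ t ∈ Set.uIcc a b,
      HasDerivAt (fun y => Real.log (Real.log y)) ((t * Real.log t)⁻¹) t := by
    intro t ht
    rw [hIcc] at ht
    have ht1 : 1 < t := lt_of_lt_of_le h1a ht.1
    have ht0 : 0 < t := lt_trans one_pos ht1
    have hlt : 0 < Real.log t := Real.log_pos ht1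
    have h1 := Real.hasDerivAt_log (ne_of_gt ht0)
    have h2 := Real.hasDerivAt_log (ne_of_gt hlt)
    have h3 := h2.comp t h1
    rw [mul_inv, mul_comm]
    exact h3
  have hint : IntervalIntegrable (fun t => (t * Real.log t)⁻¹)
      MeasureTheory.volume a b := by
    apply ContinuousOn.intervalIntegrable
    rw [hIcc]
    apply ContinuousOn.inv₀
    · exact continuousOn_id.mul (Real.continuousOn_log.mono
        (fun t ht => ne_of_gt (lt_trans one_pos (lt_of_lt_of_le h1a ht.1))))
    · intro t ht
      have ht1 : 1 < t := lt_of_lt_of_le h1a ht.1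
      exact ne_of_gt (mul_pos (lt_trans one_pos ht1) (Real.log_pos ht1))
  exact intervalIntegral.integral_eq_sub_of_hasDerivAt hderiv hint

-- helper: lower bound
lemma int_ge_aux {a b c : ℝ} (h1a : 1 < a) (hab : a ≤ b) (hc : 0 < c) {g : ℝ → ℝ}
    (hg : ContinuousOn g (Set.Icc a b))
    (hgpos : ∀ t ∈ Set.Icc a b, 0 < g t)
    (hgle : ∀ t ∈ Set.Icc a b, g t ≤ c * Real.log t) :
    c⁻¹ * (Real.log (Real.log b) - Real.log (Real.log a))
      ≤ ∫ t in a..b, 1 / (t * g t) := by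
  have h0a : (0:ℝ) < a := lt_trans one_pos h1a
  have hIcc : Set.uIcc a b = Set.Icc a b := Set.uIcc_of_le hab
  have hcont1 : ContinuousOn (fun t => 1 / (t * g t)) (Set.Icc a b) := by
    apply ContinuousOn.div continuousOn_const (continuousOn_id.mul hg)
    intro t ht
    exact ne_of_gt (mul_pos (lt_of_lt_of_le h0a ht.1) (hgpos t ht))
  have hcont2 : ContinuousOn (fun t : ℝ => c⁻¹ * (t * Real.log t)⁻¹) (Set.Icc a b) := by
    apply ContinuousOn.mul continuousOn_const
    apply ContinuousOn.inv₀
    · exact continuousOn_id.mul (Real.continuousOn_log.mono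
        (fun t ht => ne_of_gt (lt_trans one_pos (lt_of_lt_of_le h1a ht.1))))
    · intro t ht
      have ht1 : 1 < t := lt_of_lt_of_le h1a ht.1
      exact ne_of_gt (mul_pos (lt_trans one_pos ht1) (Real.log_pos ht1))
  have key : (∫ t in a..b, c⁻¹ * (t * Real.log t)⁻¹) ≤ ∫ t in a..b, 1 / (t * g t) := by
    apply intervalIntegral.integral_mono_on hab
    · exact (hIcc ▸ hcont2).intervalIntegrable
    · exact (hIcc ▸ hcont1).intervalIntegrable
    · intro t ht
      have ht1 : 1 < t := lt_of_lt_of_le h1a ht.1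
      have ht0 : 0 < t := lt_trans one_pos ht1
      have hlt : 0 < Real.log t := Real.log_pos ht1
      have hgt : 0 < g t := hgpos t ht
      have hle := hgle t ht
      rw [one_div, mul_comm c⁻¹ _, ← mul_inv]
      apply inv_anti₀ (mul_pos ht0 hgt)
      nlinarith
  calc c⁻¹ * (Real.log (Real.log b) - Real.log (Real.log a))
      = ∫ t in a..b, c⁻¹ * (t * Real.log t)⁻¹ := by
        rw [intervalIntegral.integral_const_mul, int_loglog h1a hab]
    _ ≤ _ := key

lemma hMD_aux (c al y : ℝ) (hc0 : 0 < c) (hal0 : 0 < al)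
    (hy : y ≤ 2*(2*c + 2*c*al + 2 - 1)) :
    1 + 2*al*c + c*y ≤ (2*c + 2*c*al + 2)^2 := by
  nlinarith only [mul_le_mul_of_nonneg_left hy hc0.le,
    mul_nonneg hc0.le hal0.le, hc0, hal0,
    mul_nonneg (mul_nonneg hc0.le hc0.le) hal0.le,
    mul_nonneg (mul_nonneg (mul_nonneg hc0.le hc0.le) hal0.le) hal0.le]

set_option maxHeartbeats 2000000 in
theorem stmt18 (n : ℕ) (hn : 1 ≤ n) (q : ℝ) (hq : 1 < q) :
    -- logarithmic modulus ω(r) = k / ln(1/r)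
    (∀ k : ℝ, 0 ≤ k → ∀ r₀ ∈ Set.Ioo (0:ℝ) 1,
      MonotoneOn (fun r => k / Real.log (1 / r)) (Set.Ioc 0 r₀) →
      k / Real.log (1 / r₀) < 1 →
      GehringCond n q r₀ (fun r => k / Real.log (1 / r))) ∧
    -- nonlogarithmic modulus ω(r) = L · ln ln(1/r) / ln(1/r)
    (∀ L : ℝ, 0 < L → L ≤ 1 / (n:ℝ) → ∀ r₀ ∈ Set.Ioo (0:ℝ) 1,
      MonotoneOn (fun r => L * Real.log (Real.log (1 / r)) / Real.log (1 / r))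
        (Set.Ioc 0 r₀) →
      L * Real.log (Real.log (1 / r₀)) / Real.log (1 / r₀) < 1 →
      GehringCond n q r₀
        (fun r => L * Real.log (Real.log (1 / r)) / Real.log (1 / r))) := by
  have hq0 : (0:ℝ) < q := lt_trans one_pos hq
  have hn1 : (1:ℝ) ≤ (n:ℝ) := by exact_mod_cast hn
  have hn0 : (0:ℝ) < (n:ℝ) := lt_of_lt_of_le one_pos hn1
  constructor
  · -- logarithmic case
    rintro k hk r₀ ⟨hr0, hr1⟩ _hmono _hω1
    intro Λ _hSM hΛ
    set lam : ℝ := r₀ ^ (-(n:ℝ) / q) with hlam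
    have hlam1 : 1 < lam := by
      rw [hlam]
      rw [Real.one_lt_rpow_iff_of_pos hr0]
      right
      refine ⟨hr1, ?_⟩
      rw [neg_div]
      have : 0 < (n:ℝ)/q := div_pos hn0 hq0
      linarith
    have hlam0 : (0:ℝ) < lam := lt_trans one_pos hlam1
    set A : ℝ := Real.exp (k * n / q) with hA
    have hA1 : 1 ≤ A := Real.one_le_exp (by positivity)
    have hA0 : (0:ℝ) < A := lt_of_lt_of_le one_pos hA1
    have hAq : (0:ℝ) < A ^ q := Real.rpow_pos_of_pos hA0 q
    have haF : ∀ t, lam ≤ t →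
        aFun n q r₀ (fun r => k / Real.log (1 / r)) t = A := by
      intro t ht
      have ht1 : 1 < t := lt_of_lt_of_le hlam1 ht
      have ht0 : 0 < t := lt_trans one_pos ht1
      have hlt : 0 < Real.log t := Real.log_pos ht1
      rw [aFun, if_pos (hlam ▸ ht)]
      rw [Real.rpow_neg ht0.le, one_div, inv_inv, Real.log_rpow ht0,
        Real.rpow_def_of_pos ht0, hA]
      congr 1
      field_simp
    constructor
    · intro K hK
      refine ⟨(A ^ q)⁻¹ * Real.log (A * K), ?_⟩
      intro s hs
      have hs1 : 1 < s := lt_of_lt_of_le hlam1 hs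
      have hs0 : 0 < s := lt_trans one_pos hs1
      have hK0 : (0:ℝ) < K := lt_of_lt_of_le one_pos hK
      have hsT : s ≤ A * K * s := by
        calc s ≤ K * s := le_mul_of_one_le_left hs0.le hK
          _ ≤ A * (K * s) := le_mul_of_one_le_left (by positivity) hA1
          _ = A * K * s := by ring
      have hT : lam ≤ A * K * s := le_trans hs hsT
      have hΛv : Λ (K * s) = A * K * s := by
        have h1 := hΛ (A * K * s) hT
        rw [haF _ hT] at h1
        rw [show A * K * s / A = K * s by field_simp] at h1
        exact h1
      rw [hΛv]
      have hb := int_le_aux hs1 hsT (g := fun t =>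
          aFun n q r₀ (fun r => k / Real.log (1 / r)) t ^ q)
        (by
          apply ContinuousOn.congr (continuousOn_const (c := A ^ q))
          intro t ht
          simp only [haF t (le_trans hs ht.1)])
        hAq
        (by
          intro t ht
          simp only [haF t (le_trans hs ht.1), le_refl])
      calc (∫ t in s..(A * K * s),
            1 / (t * aFun n q r₀ (fun r => k / Real.log (1 / r)) t ^ q))
          ≤ (A ^ q)⁻¹ * Real.log (A * K * s / s) := hb
        _ = (A ^ q)⁻¹ * Real.log (A * K) := by
            rw [show A * K * s / s = A * K by field_simp]
    · -- divergence
      have hgt : Tendsto (fun b => (A ^ q)⁻¹ * (Real.log b - Real.log lam))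
          atTop atTop := by
        apply Tendsto.const_mul_atTop (inv_pos.2 hAq)
        apply tendsto_atTop_add_const_right
        exact Real.tendsto_log_atTop
      apply tendsto_atTop_mono' atTop ?_ hgt
      filter_upwards [eventually_ge_atTop lam] with b hb
      have hb1 : 1 < b := lt_of_lt_of_le hlam1 hb
      have hb0 : 0 < b := lt_trans one_pos hb1
      have hEq : Set.EqOn
          (fun t => 1 / (t * aFun n q r₀ (fun r => k / Real.log (1 / r)) t ^ q))
          (fun t => (A ^ q)⁻¹ * t⁻¹) (Set.uIcc lam b) := by
        intro t ht
        rw [Set.uIcc_of_le hb] at ht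
        simp only
        rw [haF t ht.1, one_div, mul_inv, mul_comm]
      rw [intervalIntegral.integral_congr hEq, intervalIntegral.integral_const_mul,
        integral_inv (by rw [Set.uIcc_of_le hb]; rintro ⟨h1, h2⟩; linarith),
        Real.log_div (ne_of_gt hb0) (ne_of_gt hlam0)]
  · -- nonlogarithmic case
    rintro L hL hLn r₀ ⟨hr0, hr1⟩ hmono _hω1
    intro Λ _hSM hΛ
    have hE1 : (1:ℝ) ≤ Real.exp 1 := Real.one_le_exp zero_le_one
    have hE0 : (0:ℝ) < Real.exp 1 := Real.exp_pos 1
    have hv0 : 0 < Real.log (1 / r₀) :=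
      Real.log_pos (by rw [lt_div_iff₀ hr0]; linarith)
    set v : ℝ := Real.log (1 / r₀) with hv
    have hve : Real.exp 1 ≤ v := by
      by_contra hcon
      push_neg at hcon
      have hr₀mem : r₀ ∈ Set.Ioc (0:ℝ) r₀ := ⟨hr0, le_refl _⟩
      have hlt : 1 / r₀ < Real.exp (Real.exp 1) := by
        rw [show (1:ℝ)/r₀ = Real.exp v by rw [hv, Real.exp_log (by positivity)]]
        exact Real.exp_lt_exp.2 hcon
      have h2 : 1 < Real.exp (Real.exp 1) * r₀ := by
        rw [div_lt_iff₀ hr0] at hlt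
        linarith
      have hrexp : Real.exp (-Real.exp 1) ∈ Set.Ioc (0:ℝ) r₀ := by
        refine ⟨Real.exp_pos _, ?_⟩
        rw [Real.exp_neg]
        rw [inv_le_comm₀ (Real.exp_pos _) hr0]
        rw [inv_eq_one_div]
        exact hlt.le
      have hmle := hmono hrexp hr₀mem hrexp.2
      simp only at hmle
      rw [one_div (Real.exp (-Real.exp 1)), Real.exp_neg, inv_inv,
        Real.log_exp, Real.log_exp] at hmle
      have hlv : Real.log v < v / Real.exp 1 := by
        have hpos : 0 < v / Real.exp 1 := by positivity
        have hne : v / Real.exp 1 ≠ 1 := by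
          intro h
          have hveq : v = Real.exp 1 := by
            field_simp at h
            linarith
          rw [hveq] at hcon
          exact lt_irrefl _ hcon
        have hd := Real.log_lt_sub_one_of_pos hpos hne
        rw [Real.log_div (ne_of_gt hv0) (ne_of_gt hE0), Real.log_exp] at hd
        linarith
      have hfin : L * Real.log v / v < L * 1 / Real.exp 1 := by
        rw [div_lt_div_iff₀ hv0 hE0]
        have h1 : Real.log v * Real.exp 1 < v := (lt_div_iff₀ hE0).1 hlv
        linarith [mul_lt_mul_of_pos_left h1 hL]
      linarith
    set lam : ℝ := r₀ ^ (-(n:ℝ) / q) with hlam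
    have hlam1 : 1 < lam := by
      rw [hlam, Real.one_lt_rpow_iff_of_pos hr0]
      right
      refine ⟨hr1, ?_⟩
      rw [neg_div]
      have : 0 < (n:ℝ)/q := div_pos hn0 hq0
      linarith
    have hlam0 : (0:ℝ) < lam := lt_trans one_pos hlam1
    set c : ℝ := q / (n:ℝ) with hc
    have hc0 : 0 < c := div_pos hq0 hn0
    clear_value c
    set be : ℝ := L * (n:ℝ) with hbe
    have hbe0 : 0 < be := mul_pos hL hn0
    clear_value be
    set al : ℝ := be / q with hal
    have hal0 : 0 < al := div_pos hbe0 hq0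
    clear_value al
    have hbe1 : be ≤ 1 := by
      rw [hbe]
      have h1 := mul_le_mul_of_nonneg_right hLn hn0.le
      rwa [one_div, inv_mul_cancel₀ (ne_of_gt hn0)] at h1
    have hal1 : al ≤ 1 := by
      rw [hal, div_le_one hq0]
      linarith
    have hloglam : c * Real.log lam = v := by
      rw [hc, hlam, Real.log_rpow hr0, hv, one_div, Real.log_inv]
      field_simp
    have hclog : ∀ t, lam ≤ t → Real.exp 1 ≤ c * Real.log t := by
      intro t ht
      have h1 : Real.log lam ≤ Real.log t := Real.log_le_log hlam0 ht
      calc Real.exp 1 ≤ v := hve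
        _ = c * Real.log lam := hloglam.symm
        _ ≤ c * Real.log t := mul_le_mul_of_nonneg_left h1 hc0.le
    have haF : ∀ t, lam ≤ t →
        aFun n q r₀
          (fun r => L * Real.log (Real.log (1 / r)) / Real.log (1 / r)) t
          = (c * Real.log t) ^ al := by
      intro t ht
      have ht1 : 1 < t := lt_of_lt_of_le hlam1 ht
      have ht0 : 0 < t := lt_trans one_pos ht1
      have hlt : 0 < Real.log t := Real.log_pos ht1
      have hu : 0 < q / (n:ℝ) * Real.log t := by positivity
      rw [hc, hal, hbe]
      rw [aFun, if_pos (hlam ▸ ht)]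
      rw [Real.rpow_neg ht0.le, one_div, inv_inv, Real.log_rpow ht0,
        Real.rpow_def_of_pos ht0, Real.rpow_def_of_pos hu]
      congr 1
      have hu' : q / (n:ℝ) * Real.log t ≠ 0 := ne_of_gt hu
      field_simp
    have haq : ∀ t, lam ≤ t →
        aFun n q r₀
          (fun r => L * Real.log (Real.log (1 / r)) / Real.log (1 / r)) t ^ q
          = (c * Real.log t) ^ be := by
      intro t ht
      have hu : 0 < c * Real.log t := lt_of_lt_of_le hE0 (hclog t ht)
      rw [haF t ht, ← Real.rpow_mul hu.le]
      congr 1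
      rw [hal]
      field_simp
    constructor
    · -- bounded part
      intro K hK
      have hK0 : 0 < K := lt_of_lt_of_le one_pos hK
      have hlogK : 0 ≤ Real.log K := Real.log_nonneg hK
      set D : ℝ := (2*c + 2*c*al + 2) ^ 2 with hD
      clear_value D
      have hu₀2 : (2:ℝ) ≤ 2*c + 2*c*al + 2 := by
        linarith only [mul_nonneg hc0.le hal0.le, hc0.le]
      have hD1 : 1 ≤ D := by rw [hD]; nlinarith only [hu₀2]
      have hD0 : 0 < D := lt_of_lt_of_le one_pos hD1
      have hlogD : Real.log D ≤ 2*(2*c + 2*c*al + 2 - 1) := by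
        rw [hD, Real.log_pow]
        have h1 := Real.log_le_sub_one_of_pos (show (0:ℝ) < 2*c + 2*c*al + 2 by linarith)
        push_cast
        linarith
      have hlogD0 : 0 ≤ Real.log D := Real.log_nonneg hD1
      refine ⟨Real.log K + 2*al*Real.log (c*Real.log K + 1) + Real.log D + 2*al/be, ?_⟩
      intro s hs
      have hs1 : 1 < s := lt_of_lt_of_le hlam1 hs
      have hs0 : 0 < s := lt_trans one_pos hs1
      have hxs : s ≤ K*s := le_mul_of_one_le_left hs0.le hK
      have hx : lam ≤ K*s := le_trans hs hxs
      have hx0 : 0 < K*s := by positivity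
      have hw : Real.exp 1 ≤ c * Real.log (K*s) := hclog _ hx
      have hw1 : 1 ≤ c * Real.log (K*s) := le_trans hE1 hw
      have hw0 : 0 < c * Real.log (K*s) := lt_of_lt_of_le one_pos hw1
      set w : ℝ := c * Real.log (K*s) with hwd
      clear_value w
      have hwal1 : 1 ≤ w ^ (2*al) := by
        calc (1:ℝ) = w ^ (0:ℝ) := (Real.rpow_zero w).symm
          _ ≤ w ^ (2*al) := Real.rpow_le_rpow_of_exponent_le hw1 (by positivity)
      have hwal0 : 0 < w ^ (2*al) := Real.rpow_pos_of_pos hw0 _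
      set T : ℝ := K*s * w ^ (2*al) * D with hT
      clear_value T
      have hxT : K*s ≤ T := by
        rw [hT]
        have h1 : K*s ≤ K*s*w^(2*al) := le_mul_of_one_le_right hx0.le hwal1
        have h2 : K*s*w^(2*al) ≤ K*s*w^(2*al)*D :=
          le_mul_of_one_le_right (mul_nonneg hx0.le hwal0.le) hD1
        linarith
      have hlamT : lam ≤ T := le_trans hx hxT
      have hT0 : 0 < T := lt_of_lt_of_le hx0 hxT
      have hclogT0 : 0 < c * Real.log T := lt_of_lt_of_le hE0 (hclog T hlamT)
      have hclogT : c * Real.log T ≤ w * (1 + 2*al*c + c*Real.log D) := by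
        rw [hT, Real.log_mul (by positivity) (ne_of_gt hD0),
          Real.log_mul (ne_of_gt hx0) (ne_of_gt hwal0), Real.log_rpow hw0]
        have h3 : Real.log w ≤ w - 1 := Real.log_le_sub_one_of_pos hw0
        have h4 : Real.log D ≤ Real.log D * w := le_mul_of_one_le_right hlogD0 hw1
        have hAC : (0:ℝ) ≤ 2*al*c := by positivity
        have eA := mul_le_mul_of_nonneg_left h3 hAC
        have eB := mul_le_mul_of_nonneg_left h4 hc0.le
        linarith only [eA, eB, hAC, hwd.symm.le, hwd.symm.ge]
      have hM1 : (1:ℝ) ≤ 1 + 2*al*c + c*Real.log D := by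
        have h7 : (0:ℝ) ≤ 2*al*c := by positivity
        linarith only [h7, mul_nonneg hc0.le hlogD0]
      have hMD : 1 + 2*al*c + c*Real.log D ≤ D := by
        have e2 := hMD_aux c al (Real.log D) hc0 hal0 hlogD
        rw [← hD] at e2
        exact e2
      have hMal : (1 + 2*al*c + c*Real.log D) ^ al ≤ D := by
        calc (1 + 2*al*c + c*Real.log D) ^ al
            ≤ (1 + 2*al*c + c*Real.log D) ^ (1:ℝ) :=
              Real.rpow_le_rpow_of_exponent_le hM1 hal1
          _ = 1 + 2*al*c + c*Real.log D := Real.rpow_one _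
          _ ≤ D := hMD
      have hcal : (c*Real.log T) ^ al ≤ w ^ (2*al) * D := by
        calc (c*Real.log T) ^ al ≤ (w * (1 + 2*al*c + c*Real.log D)) ^ al :=
              Real.rpow_le_rpow hclogT0.le hclogT hal0.le
          _ = w ^ al * (1 + 2*al*c + c*Real.log D) ^ al :=
              Real.mul_rpow hw0.le (by linarith)
          _ ≤ w ^ (2*al) * D := by
              apply mul_le_mul ?_ hMal (Real.rpow_nonneg (by linarith) _)
                hwal0.le
              exact Real.rpow_le_rpow_of_exponent_le hw1 (by linarith)
      have hsT_ge : K*s ≤ T / aFun n q r₀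
          (fun r => L * Real.log (Real.log (1 / r)) / Real.log (1 / r)) T := by
        rw [haF T hlamT, le_div_iff₀ (Real.rpow_pos_of_pos hclogT0 al)]
        calc K*s*(c*Real.log T)^al ≤ K*s*(w^(2*al)*D) :=
              mul_le_mul_of_nonneg_left hcal hx0.le
          _ = T := by rw [hT]; ring
      have hslam_le : lam / aFun n q r₀
          (fun r => L * Real.log (Real.log (1 / r)) / Real.log (1 / r)) lam
          ≤ K*s := by
        rw [haF lam le_rfl]
        have h1 : 1 ≤ (c*Real.log lam)^al := by
          calc (1:ℝ) = (c*Real.log lam)^(0:ℝ) := (Real.rpow_zero _).symm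
            _ ≤ _ := Real.rpow_le_rpow_of_exponent_le
                (le_trans hE1 (hclog lam le_rfl)) hal0.le
        exact le_trans (div_le_self hlam0.le h1) hx
      have hcont : ContinuousOn (fun t => t / aFun n q r₀
          (fun r => L * Real.log (Real.log (1 / r)) / Real.log (1 / r)) t)
          (Set.Icc lam T) := by
        apply ContinuousOn.congr (f := fun t : ℝ => t / (c*Real.log t)^al)
        · apply ContinuousOn.div continuousOn_id
          · apply ContinuousOn.rpow_const
            · exact continuousOn_const.mul (Real.continuousOn_log.mono
                (fun t ht => ne_of_gt (lt_trans one_pos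
                  (lt_of_lt_of_le hlam1 ht.1))))
            · intro t ht; right; exact hal0.le
          · intro t ht
            exact ne_of_gt (Real.rpow_pos_of_pos
              (lt_of_lt_of_le hE0 (hclog t ht.1)) al)
        · intro t ht
          simp only [haF t ht.1]
      obtain ⟨t₁, ht₁mem, ht₁⟩ :=
        intermediate_value_Icc hlamT hcont ⟨hslam_le, hsT_ge⟩
      have hΛx : Λ (K*s) = t₁ := by
        rw [← ht₁]
        exact hΛ t₁ ht₁mem.1
      rw [hΛx]
      have ht₁1 : 1 < t₁ := lt_of_lt_of_le hlam1 ht₁mem.1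
      have ht₁0 : 0 < t₁ := lt_trans one_pos ht₁1
      have ht₁s : s ≤ t₁ := by
        have h1 : 1 ≤ aFun n q r₀
            (fun r => L * Real.log (Real.log (1 / r)) / Real.log (1 / r)) t₁ := by
          rw [haF t₁ ht₁mem.1]
          calc (1:ℝ) = (c*Real.log t₁)^(0:ℝ) := (Real.rpow_zero _).symm
            _ ≤ _ := Real.rpow_le_rpow_of_exponent_le
                (le_trans hE1 (hclog t₁ ht₁mem.1)) hal0.le
        have h3 : t₁ / aFun n q r₀
            (fun r => L * Real.log (Real.log (1 / r)) / Real.log (1 / r)) t₁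
            ≤ t₁ := div_le_self ht₁0.le h1
        have h2 : t₁ / aFun n q r₀
            (fun r => L * Real.log (Real.log (1 / r)) / Real.log (1 / r)) t₁
            = K*s := ht₁
        linarith
      have hEq : Set.EqOn (fun t => 1 / (t * aFun n q r₀
            (fun r => L * Real.log (Real.log (1 / r)) / Real.log (1 / r)) t ^ q))
          (fun t => 1 / (t * (c*Real.log t)^be)) (Set.uIcc s t₁) := by
        intro t ht
        rw [Set.uIcc_of_le ht₁s] at ht
        simp only [haq t (le_trans hs ht.1)]
      rw [intervalIntegral.integral_congr hEq]
      have hws : Real.exp 1 ≤ c * Real.log s := hclog s hs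
      have hws1 : 1 ≤ c * Real.log s := le_trans hE1 hws
      have hws0 : 0 < c * Real.log s := lt_of_lt_of_le one_pos hws1
      have hwsb0 : 0 < (c*Real.log s)^be := Real.rpow_pos_of_pos hws0 _
      have hwsb1 : 1 ≤ (c*Real.log s)^be := by
        calc (1:ℝ) = (c*Real.log s)^(0:ℝ) := (Real.rpow_zero _).symm
          _ ≤ _ := Real.rpow_le_rpow_of_exponent_le hws1 hbe0.le
      have hIb := int_le_aux hs1 ht₁s (g := fun t => (c*Real.log t)^be)
        (by
          apply ContinuousOn.rpow_const
          · exact continuousOn_const.mul (Real.continuousOn_log.mono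
              (fun t ht => ne_of_gt (lt_trans one_pos
                (lt_of_lt_of_le hs1 ht.1))))
          · intro t ht; right; exact hbe0.le)
        hwsb0
        (by
          intro t ht
          apply Real.rpow_le_rpow hws0.le ?_ hbe0.le
          exact mul_le_mul_of_nonneg_left (Real.log_le_log hs0 ht.1) hc0.le)
      have hlt₁ : Real.log (t₁ / s)
          ≤ Real.log K + 2*al*Real.log w + Real.log D := by
        rw [Real.log_div (ne_of_gt ht₁0) (ne_of_gt hs0)]
        have h1 : Real.log t₁ ≤ Real.log T := Real.log_le_log ht₁0 ht₁mem.2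
        have h2 : Real.log T
            = Real.log K + Real.log s + 2*al*Real.log w + Real.log D := by
          rw [hT, Real.log_mul (by positivity) (ne_of_gt hD0),
            Real.log_mul (ne_of_gt hx0) (ne_of_gt hwal0), Real.log_rpow hw0,
            Real.log_mul (ne_of_gt hK0) (ne_of_gt hs0)]
        linarith
      have hlogw : Real.log w
          ≤ Real.log (c*Real.log K + 1) + (c*Real.log s)^be / be := by
        have h1 : w ≤ (c*Real.log K + 1) * (c*Real.log s) := by
          rw [hwd, Real.log_mul (ne_of_gt hK0) (ne_of_gt hs0)]
          have h6 : c*Real.log K ≤ c*Real.log K * (c*Real.log s) :=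
            le_mul_of_one_le_right (mul_nonneg hc0.le hlogK) hws1
          linarith only [h6]
        have h2 : Real.log w ≤ Real.log ((c*Real.log K+1)*(c*Real.log s)) :=
          Real.log_le_log hw0 h1
        rw [Real.log_mul (ne_of_gt (by linarith [mul_nonneg hc0.le hlogK] :
          (0:ℝ) < c*Real.log K + 1)) (ne_of_gt hws0)] at h2
        have h3 : Real.log (c*Real.log s) ≤ (c*Real.log s)^be / be := by
          have h4 : Real.log ((c*Real.log s)^be) = be * Real.log (c*Real.log s) :=
            Real.log_rpow hws0 _
          have h5 := Real.log_le_sub_one_of_pos hwsb0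
          rw [h4] at h5
          rw [le_div_iff₀ hbe0]
          linarith only [h5, mul_comm be (Real.log (c*Real.log s))]
        linarith
      have hlogMK0 : 0 ≤ Real.log (c*Real.log K + 1) :=
        Real.log_nonneg (by linarith [mul_nonneg hc0.le hlogK])
      calc (∫ t in s..t₁, 1/(t*(c*Real.log t)^be))
          ≤ ((c*Real.log s)^be)⁻¹ * Real.log (t₁/s) := hIb
        _ ≤ Real.log K + 2*al*Real.log (c*Real.log K + 1) + Real.log D
            + 2*al/be := by
            have hkm0 : 0 ≤ Real.log K + 2*al*Real.log (c*Real.log K+1)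
                + Real.log D := by
              linarith only [mul_nonneg hal0.le hlogMK0, hlogK, hlogD0]
            have hbound : Real.log (t₁/s)
                ≤ (Real.log K + 2*al*Real.log (c*Real.log K+1) + Real.log D)
                  + 2*al*((c*Real.log s)^be/be) := by
              linarith only [hlt₁, mul_le_mul_of_nonneg_left hlogw
                (show (0:ℝ) ≤ 2*al by positivity)]
            have hXinv : ((c*Real.log s)^be)⁻¹ ≤ 1 := inv_le_one_of_one_le₀ hwsb1
            calc ((c*Real.log s)^be)⁻¹ * Real.log (t₁/s)
                ≤ ((c*Real.log s)^be)⁻¹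
                  * ((Real.log K + 2*al*Real.log (c*Real.log K+1) + Real.log D)
                    + 2*al*((c*Real.log s)^be/be)) :=
                  mul_le_mul_of_nonneg_left hbound (inv_nonneg.2 hwsb0.le)
              _ = ((c*Real.log s)^be)⁻¹
                  * (Real.log K + 2*al*Real.log (c*Real.log K+1) + Real.log D)
                  + 2*al/be := by
                  field_simp
              _ ≤ (Real.log K + 2*al*Real.log (c*Real.log K+1) + Real.log D)
                  + 2*al/be := by
                  linarith only [mul_le_mul_of_nonneg_right hXinv hkm0]
    · -- divergence
      have hgt : Tendsto (fun b => c⁻¹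
          * (Real.log (Real.log b) - Real.log (Real.log lam))) atTop atTop := by
        apply Tendsto.const_mul_atTop (inv_pos.2 hc0)
        apply tendsto_atTop_add_const_right
        exact Real.tendsto_log_atTop.comp Real.tendsto_log_atTop
      apply tendsto_atTop_mono' atTop ?_ hgt
      filter_upwards [eventually_ge_atTop lam] with b hb
      have hEq : Set.EqOn (fun t => 1 / (t * aFun n q r₀
            (fun r => L * Real.log (Real.log (1 / r)) / Real.log (1 / r)) t ^ q))
          (fun t => 1 / (t * (c*Real.log t)^be)) (Set.uIcc lam b) := by
        intro t ht
        rw [Set.uIcc_of_le hb] at ht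
        simp only [haq t ht.1]
      rw [intervalIntegral.integral_congr hEq]
      apply int_ge_aux hlam1 hb hc0
      · apply ContinuousOn.rpow_const
        · exact continuousOn_const.mul (Real.continuousOn_log.mono
            (fun t ht => ne_of_gt (lt_trans one_pos
              (lt_of_lt_of_le hlam1 ht.1))))
        · intro t ht; right; exact hbe0.le
      · intro t ht
        exact Real.rpow_pos_of_pos (lt_of_lt_of_le hE0 (hclog t ht.1)) be
      · intro t ht
        calc (c*Real.log t)^be ≤ (c*Real.log t)^(1:ℝ) :=
            Real.rpow_le_rpow_of_exponent_le
              (le_trans hE1 (hclog t ht.1)) hbe1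
          _ = c*Real.log t := Real.rpow_one _
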